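/- Let x₀,…,x₅ denote the coordinate functionals on W = ℂ⁶, and let A be the 5×5 skew-symmetric matrix of linear functionals on W with upper-triangular entries A₁₂ = x₀, A₁₃ = x₁, A₁₄ = x₂, A₁₅ = x₃, A₂₃ = x₂, A₂₄ = x₃, A₂₅ = x₄, A₃₄ = x₄, A₃₅ = x₅, A₄₅ = x₀ + x₅. Then for each index i ∈ {1,…,5}, the quadratic form on W given by the Pfaffian of the 4×4 skew-symmetric matrix obtained from A by deleting its i-th row and i-th column (for {j<k<l<m} = {1,…,5}∖{i}, this Pfaffian is w ↦ A_{jk}(w)A_{lm}(w) − A_{jl}(w)A_{km}(w) + A_{jm}(w)A_{kl}(w)) has rank at least 5. -/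
import Mathlib


open Module

/-- The rank of a quadratic form `q` on a finite-dimensional complex vector space `W`:
the rank of the linear map `W → W^∨` induced by its polar bilinear form
`(x, y) ↦ q (x + y) - q x - q y`. -/
noncomputable def qfRank {W : Type*} [AddCommGroup W] [Module ℂ W]
    (q : QuadraticForm ℂ W) : ℕ :=
  Module.finrank ℂ (LinearMap.range (QuadraticMap.polarBilin q))

lemma rank_ge_aux (q : QuadraticForm ℂ (Fin 6 → ℂ)) (v : Fin 5 → (Fin 6 → ℂ))
    (h : LinearIndependent ℂ (fun i => q.polarBilin (v i))) : 5 ≤ qfRank q := by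
  have hsub : Submodule.span ℂ (Set.range (fun i => q.polarBilin (v i))) ≤
      LinearMap.range q.polarBilin := by
    rw [Submodule.span_le]; rintro _ ⟨i, rfl⟩; exact ⟨v i, rfl⟩
  calc (5:ℕ) = Fintype.card (Fin 5) := by simp
    _ = finrank ℂ (Submodule.span ℂ (Set.range (fun i => q.polarBilin (v i)))) :=
        (finrank_span_eq_card h).symm
    _ ≤ qfRank q := Submodule.finrank_mono hsub

lemma cons_val_five' {α : Type*} {m : ℕ} (x : α) (u : Fin (m + 5) → α) :
    Matrix.vecCons x u 5 = u 4 := rfl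

set_option maxHeartbeats 1000000 in
/-- Let `x₀, …, x₅` be the coordinate functionals on `W = ℂ⁶` and let `A` be the
`5 × 5` skew-symmetric matrix of linear functionals with upper-triangular entries
`A₁₂ = x₀, A₁₃ = x₁, A₁₄ = x₂, A₁₅ = x₃, A₂₃ = x₂, A₂₄ = x₃, A₂₅ = x₄, A₃₄ = x₄, A₃₅ = x₅,`
`A₄₅ = x₀ + x₅`. Then each `4 × 4` principal Pfaffian of `A` (obtained by deleting the `i`-th
row and column, i.e. the quadratic form
`w ↦ A j k w * A l m w - A j l w * A k m w + A j m w * A k l w` for `j < k < l < m`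
the indices different from `i`) has rank at least `5`. -/
theorem principal_pfaffians_rank_ge_five
    (x : Fin 6 → Module.Dual ℂ (Fin 6 → ℂ))
    (hx : ∀ i, x i = LinearMap.proj i)
    (A : Matrix (Fin 5) (Fin 5) (Module.Dual ℂ (Fin 6 → ℂ)))
    (hskew : ∀ i j, A j i = -A i j)
    (h12 : A 0 1 = x 0) (h13 : A 0 2 = x 1) (h14 : A 0 3 = x 2) (h15 : A 0 4 = x 3)
    (h23 : A 1 2 = x 2) (h24 : A 1 3 = x 3) (h25 : A 1 4 = x 4)
    (h34 : A 2 3 = x 4) (h35 : A 2 4 = x 5) (h45 : A 3 4 = x 0 + x 5) :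
    ∀ i j k l m : Fin 5, j < k → k < l → l < m →
      i ≠ j → i ≠ k → i ≠ l → i ≠ m →
      5 ≤ qfRank (QuadraticMap.linMulLin (A j k) (A l m) -
        QuadraticMap.linMulLin (A j l) (A k m) +
        QuadraticMap.linMulLin (A j m) (A k l)) := by
  simp only [hx] at h12 h13 h14 h15 h23 h24 h25 h34 h35 h45
  intro i j k l m hjk hkl hlm hij hik hil him
  fin_cases i <;> simp only [ne_eq, Fin.ext_iff, Fin.val_mk] at hij hik hil him
  · -- i = 0 : (j,k,l,m) = (1,2,3,4), q = x2(x0+x5) - x3 x5 + x4²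
    obtain rfl : j = 1 := by omega
    obtain rfl : k = 2 := by omega
    obtain rfl : l = 3 := by omega
    obtain rfl : m = 4 := by omega
    rw [h23, h45, h24, h35, h25, h34]
    apply rank_ge_aux _
      ![![1,0,0,0,0,0], ![0,0,1,0,0,0], ![0,0,0,1,0,0], ![0,0,0,0,1,0], ![0,0,0,0,0,1]]
    rw [Fintype.linearIndependent_iff]
    intro c hc
    have H := fun t => congrFun (congrArg DFunLike.coe hc) t
    have e0 := H ![1,0,0,0,0,0]
    have e2 := H ![0,0,1,0,0,0]
    have e3 := H ![0,0,0,1,0,0]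
    have e4 := H ![0,0,0,0,1,0]
    have e5 := H ![0,0,0,0,0,1]
    simp only [LinearMap.coe_sum, Finset.sum_apply, LinearMap.smul_apply,
      QuadraticMap.polarBilin_apply_apply, QuadraticMap.polar, Fin.sum_univ_five,
      Matrix.cons_val_zero, Matrix.cons_val_one, Matrix.head_cons, Matrix.cons_val_two,
      Matrix.tail_cons, Matrix.cons_val_three, Matrix.cons_val_four, cons_val_five',
      QuadraticMap.add_apply, QuadraticMap.sub_apply, QuadraticMap.linMulLin_apply,
      LinearMap.add_apply, LinearMap.proj_apply, Pi.add_apply, Matrix.cons_add,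
      Matrix.empty_add_empty, LinearMap.zero_apply, Pi.zero_apply, smul_eq_mul] at e0 e2 e3 e4 e5
    norm_num at e0 e2 e3 e4 e5
    have k0 : c 0 = 0 := by linear_combination e2 - e3
    have k1 : c 1 = 0 := by linear_combination e0
    have k2 : c 2 = 0 := by linear_combination e0 - e5
    have k3 : c 3 = 0 := by linear_combination e4
    have k4 : c 4 = 0 := by linear_combination e3
    intro t
    fin_cases t <;> assumption
  · -- i = 1 : (j,k,l,m) = (0,2,3,4), q = x1(x0+x5) - x2 x5 + x3 x4
    obtain rfl : j = 0 := by omega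
    obtain rfl : k = 2 := by omega
    obtain rfl : l = 3 := by omega
    obtain rfl : m = 4 := by omega
    rw [h13, h45, h14, h35, h15, h34]
    apply rank_ge_aux _
      ![![1,0,0,0,0,0], ![0,1,0,0,0,0], ![0,0,1,0,0,0], ![0,0,0,1,0,0], ![0,0,0,0,0,1]]
    rw [Fintype.linearIndependent_iff]
    intro c hc
    have H := fun t => congrFun (congrArg DFunLike.coe hc) t
    have e0 := H ![1,0,0,0,0,0]
    have e1 := H ![0,1,0,0,0,0]
    have e2 := H ![0,0,1,0,0,0]
    have e4 := H ![0,0,0,0,1,0]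
    have e5 := H ![0,0,0,0,0,1]
    simp only [LinearMap.coe_sum, Finset.sum_apply, LinearMap.smul_apply,
      QuadraticMap.polarBilin_apply_apply, QuadraticMap.polar, Fin.sum_univ_five,
      Matrix.cons_val_zero, Matrix.cons_val_one, Matrix.head_cons, Matrix.cons_val_two,
      Matrix.tail_cons, Matrix.cons_val_three, Matrix.cons_val_four, cons_val_five',
      QuadraticMap.add_apply, QuadraticMap.sub_apply, QuadraticMap.linMulLin_apply,
      LinearMap.add_apply, LinearMap.proj_apply, Pi.add_apply, Matrix.cons_add,
      Matrix.empty_add_empty, LinearMap.zero_apply, Pi.zero_apply, smul_eq_mul] at e0 e1 e2 e4 e5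
    norm_num at e0 e1 e2 e4 e5
    have k0 : c 0 = 0 := by linear_combination e1 - e2
    have k1 : c 1 = 0 := by linear_combination e0
    have k2 : c 2 = 0 := by linear_combination e0 - e5
    have k3 : c 3 = 0 := by linear_combination e4
    have k4 : c 4 = 0 := by linear_combination e2
    intro t
    fin_cases t <;> assumption
  · -- i = 2 : (j,k,l,m) = (0,1,3,4), q = x0(x0+x5) - x2 x4 + x3²
    obtain rfl : j = 0 := by omega
    obtain rfl : k = 1 := by omega
    obtain rfl : l = 3 := by omega
    obtain rfl : m = 4 := by omega
    rw [h12, h45, h14, h25, h15, h24]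
    apply rank_ge_aux _
      ![![1,0,0,0,0,0], ![0,0,1,0,0,0], ![0,0,0,1,0,0], ![0,0,0,0,1,0], ![0,0,0,0,0,1]]
    rw [Fintype.linearIndependent_iff]
    intro c hc
    have H := fun t => congrFun (congrArg DFunLike.coe hc) t
    have e0 := H ![1,0,0,0,0,0]
    have e2 := H ![0,0,1,0,0,0]
    have e3 := H ![0,0,0,1,0,0]
    have e4 := H ![0,0,0,0,1,0]
    have e5 := H ![0,0,0,0,0,1]
    simp only [LinearMap.coe_sum, Finset.sum_apply, LinearMap.smul_apply,
      QuadraticMap.polarBilin_apply_apply, QuadraticMap.polar, Fin.sum_univ_five,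
      Matrix.cons_val_zero, Matrix.cons_val_one, Matrix.head_cons, Matrix.cons_val_two,
      Matrix.tail_cons, Matrix.cons_val_three, Matrix.cons_val_four, cons_val_five',
      QuadraticMap.add_apply, QuadraticMap.sub_apply, QuadraticMap.linMulLin_apply,
      LinearMap.add_apply, LinearMap.proj_apply, Pi.add_apply, Matrix.cons_add,
      Matrix.empty_add_empty, LinearMap.zero_apply, Pi.zero_apply, smul_eq_mul] at e0 e2 e3 e4 e5
    norm_num at e0 e2 e3 e4 e5
    have k0 : c 0 = 0 := by linear_combination e5
    have k1 : c 1 = 0 := by linear_combination e4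
    have k2 : c 2 = 0 := by linear_combination e3
    have k3 : c 3 = 0 := by linear_combination e2
    have k4 : c 4 = 0 := by linear_combination e0 - 2 * e5
    intro t
    fin_cases t <;> assumption
  · -- i = 3 : (j,k,l,m) = (0,1,2,4), q = x0 x5 - x1 x4 + x3 x2
    obtain rfl : j = 0 := by omega
    obtain rfl : k = 1 := by omega
    obtain rfl : l = 2 := by omega
    obtain rfl : m = 4 := by omega
    rw [h12, h35, h13, h25, h15, h23]
    apply rank_ge_aux _
      ![![1,0,0,0,0,0], ![0,1,0,0,0,0], ![0,0,1,0,0,0], ![0,0,0,1,0,0], ![0,0,0,0,1,0]]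
    rw [Fintype.linearIndependent_iff]
    intro c hc
    have H := fun t => congrFun (congrArg DFunLike.coe hc) t
    have e1 := H ![0,1,0,0,0,0]
    have e2 := H ![0,0,1,0,0,0]
    have e3 := H ![0,0,0,1,0,0]
    have e4 := H ![0,0,0,0,1,0]
    have e5 := H ![0,0,0,0,0,1]
    simp only [LinearMap.coe_sum, Finset.sum_apply, LinearMap.smul_apply,
      QuadraticMap.polarBilin_apply_apply, QuadraticMap.polar, Fin.sum_univ_five,
      Matrix.cons_val_zero, Matrix.cons_val_one, Matrix.head_cons, Matrix.cons_val_two,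
      Matrix.tail_cons, Matrix.cons_val_three, Matrix.cons_val_four, cons_val_five',
      QuadraticMap.add_apply, QuadraticMap.sub_apply, QuadraticMap.linMulLin_apply,
      LinearMap.add_apply, LinearMap.proj_apply, Pi.add_apply, Matrix.cons_add,
      Matrix.empty_add_empty, LinearMap.zero_apply, Pi.zero_apply, smul_eq_mul] at e1 e2 e3 e4 e5
    norm_num at e1 e2 e3 e4 e5
    have k0 : c 0 = 0 := by linear_combination e5
    have k1 : c 1 = 0 := by linear_combination e4
    have k2 : c 2 = 0 := by linear_combination e3
    have k3 : c 3 = 0 := by linear_combination e2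
    have k4 : c 4 = 0 := by linear_combination e1
    intro t
    fin_cases t <;> assumption
  · -- i = 4 : (j,k,l,m) = (0,1,2,3), q = x0 x4 - x1 x3 + x2²
    obtain rfl : j = 0 := by omega
    obtain rfl : k = 1 := by omega
    obtain rfl : l = 2 := by omega
    obtain rfl : m = 3 := by omega
    rw [h12, h34, h13, h24, h14, h23]
    apply rank_ge_aux _
      ![![1,0,0,0,0,0], ![0,1,0,0,0,0], ![0,0,1,0,0,0], ![0,0,0,1,0,0], ![0,0,0,0,1,0]]
    rw [Fintype.linearIndependent_iff]
    intro c hc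
    have H := fun t => congrFun (congrArg DFunLike.coe hc) t
    have e0 := H ![1,0,0,0,0,0]
    have e1 := H ![0,1,0,0,0,0]
    have e2 := H ![0,0,1,0,0,0]
    have e3 := H ![0,0,0,1,0,0]
    have e4 := H ![0,0,0,0,1,0]
    simp only [LinearMap.coe_sum, Finset.sum_apply, LinearMap.smul_apply,
      QuadraticMap.polarBilin_apply_apply, QuadraticMap.polar, Fin.sum_univ_five,
      Matrix.cons_val_zero, Matrix.cons_val_one, Matrix.head_cons, Matrix.cons_val_two,
      Matrix.tail_cons, Matrix.cons_val_three, Matrix.cons_val_four, cons_val_five',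
      QuadraticMap.add_apply, QuadraticMap.sub_apply, QuadraticMap.linMulLin_apply,
      LinearMap.add_apply, LinearMap.proj_apply, Pi.add_apply, Matrix.cons_add,
      Matrix.empty_add_empty, LinearMap.zero_apply, Pi.zero_apply, smul_eq_mul] at e0 e1 e2 e3 e4
    norm_num at e0 e1 e2 e3 e4
    have k0 : c 0 = 0 := by linear_combination e4
    have k1 : c 1 = 0 := by linear_combination e3
    have k2 : c 2 = 0 := by linear_combination e2
    have k3 : c 3 = 0 := by linear_combination e1
    have k4 : c 4 = 0 := by linear_combination e0
    intro t
    fin_cases t <;> assumption
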